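/- Let (X_1,X_2) be a pair of random variables in (0,1)² such that X_1 has a density bounded above by M and below by m > 0 on (0,1), and the conditional law of X_2 given X_1 = x is q₀·μ_c + Σ_{p=1}^{m'} q_p·δ_{f_p(x)}, where q₀,...,q_{m'} > 0 sum to 1 and μ_c is absolutely continuous on (0,1) with density bounded below by m_c > 0. Define r_b(u₁,u₂) = −(1/b)·log₂ P(⌊2^b X_1⌋ = ⌊2^b u₁⌋, ⌊2^b X_2⌋ = ⌊2^b u₂⌋). Then there exists a constant C (depending only on M, m, m_c, q₀) such that for every b ≥ 1 and all u₁, u₂ ∈ (0,1): 1 − C/b ≤ r_b(u₁,u₂) ≤ 2 + C/b. -/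

import Mathlib

open MeasureTheory
lemma cell_struct (b : ℕ) (u : ℝ) (hu : u ∈ Set.Ioo (0:ℝ) 1) :
    ∃ a c : ℝ, 0 ≤ a ∧ c ≤ 1 ∧ c - a = ((2:ℝ)^b)⁻¹ ∧
      {z : ℝ | ⌊(2 : ℝ) ^ b * z⌋ = ⌊(2 : ℝ) ^ b * u⌋} = Set.Ico a c := by
  have h2b : (0:ℝ) < 2 ^ b := by positivity
  set k : ℤ := ⌊(2:ℝ)^b * u⌋ with hk
  have hk0 : (0:ℤ) ≤ k := Int.floor_nonneg.2 (mul_nonneg h2b.le hu.1.le)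
  refine ⟨k / 2^b, (k+1) / 2^b, ?_, ?_, ?_, ?_⟩
  · exact div_nonneg (by exact_mod_cast hk0) h2b.le
  · rw [div_le_one h2b]
    have h1 : (2:ℝ)^b * u < 2^b * 1 := mul_lt_mul_of_pos_left hu.2 h2b
    have hlt : (k:ℝ) < (2:ℝ)^b := by
      calc (k:ℝ) ≤ 2^b * u := Int.floor_le _
      _ < 2^b := by linarith
    have h2 : k < (2^b : ℤ) := by exact_mod_cast (by push_cast; linarith : (k:ℝ) < ((2^b : ℤ) : ℝ))
    have h3 : k + 1 ≤ (2^b : ℤ) := h2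
    calc ((k:ℝ)+1) ≤ ((2^b : ℤ) : ℝ) := by exact_mod_cast h3
    _ = (2:ℝ)^b := by push_cast; ring
  · field_simp; ring
  · ext z
    simp only [Set.mem_setOf_eq, Set.mem_Ico, ← hk]
    rw [Int.floor_eq_iff, div_le_iff₀ h2b, lt_div_iff₀ h2b]
    constructor
    · rintro ⟨h1, h2⟩; exact ⟨by linarith [mul_comm ((2:ℝ)^b) z], by linarith [mul_comm ((2:ℝ)^b) z]⟩
    · rintro ⟨h1, h2⟩; exact ⟨by linarith [mul_comm ((2:ℝ)^b) z], by linarith [mul_comm ((2:ℝ)^b) z]⟩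

lemma dens_upper (g : ℝ → ENNReal) (M : ℝ) (hgM : ∀ y, g y ≤ ENNReal.ofReal M)
    (a c : ℝ) :
    volume.withDensity g (Set.Ico a c) ≤ ENNReal.ofReal M * ENNReal.ofReal (c - a) := by
  rw [withDensity_apply _ measurableSet_Ico]
  calc ∫⁻ y in Set.Ico a c, g y ≤ ∫⁻ _ in Set.Ico a c, ENNReal.ofReal M :=
        setLIntegral_mono measurable_const (fun y _ => hgM y)
  _ = ENNReal.ofReal M * volume (Set.Ico a c) := by rw [setLIntegral_const]
  _ ≤ ENNReal.ofReal M * ENNReal.ofReal (c - a) := by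
      rw [Real.volume_Ico]

lemma dens_lower (g : ℝ → ENNReal) (m : ℝ)
    (hg : ∀ y ∈ Set.Ioo (0:ℝ) 1, ENNReal.ofReal m ≤ g y)
    (a c : ℝ) (h0 : 0 ≤ a) (h1 : c ≤ 1) :
    ENNReal.ofReal m * ENNReal.ofReal (c - a) ≤ volume.withDensity g (Set.Ico a c) := by
  rw [withDensity_apply _ measurableSet_Ico]
  have hsub : Set.Ioo a c ⊆ Set.Ioo (0:ℝ) 1 := fun y hy =>
    ⟨lt_of_le_of_lt h0 hy.1, lt_of_lt_of_le hy.2 h1⟩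
  calc ENNReal.ofReal m * ENNReal.ofReal (c - a)
      = ∫⁻ _ in Set.Ioo a c, ENNReal.ofReal m := by rw [setLIntegral_const, Real.volume_Ioo]
  _ ≤ ∫⁻ y in Set.Ioo a c, g y :=
        setLIntegral_mono' measurableSet_Ioo (fun y hy => hg y (hsub hy))
  _ ≤ ∫⁻ y in Set.Ico a c, g y :=
        lintegral_mono_set Set.Ioo_subset_Ico_self

lemma bind_prod_apply (μc : Measure ℝ) [IsProbabilityMeasure μc] (m' : ℕ) (q : ℕ → ℝ)
    (f : ℕ → ℝ → ℝ) (hfm : ∀ p ∈ Finset.Icc 1 m', Measurable (f p))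
    (ν : Measure ℝ) (A B : Set ℝ) (hA : MeasurableSet A) (hB : MeasurableSet B) :
    (ν.bind (fun x =>
      (ENNReal.ofReal (q 0) • μc +
        ∑ p ∈ Finset.Icc 1 m', ENNReal.ofReal (q p) • Measure.dirac (f p x)).map
        (fun y => (x, y)))) (A ×ˢ B)
      = ∫⁻ x in A,
          (ENNReal.ofReal (q 0) • μc +
            ∑ p ∈ Finset.Icc 1 m', ENNReal.ofReal (q p) • Measure.dirac (f p x)) B ∂ν := by
  set mix : ℝ → Measure ℝ := fun x =>
    ENNReal.ofReal (q 0) • μc +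
      ∑ p ∈ Finset.Icc 1 m', ENNReal.ofReal (q p) • Measure.dirac (f p x) with hmix
  have hKm : Measurable fun x => (mix x).map (fun y => (x, y)) := by
    apply Measure.measurable_of_measurable_coe
    intro s hs
    have heq : ∀ x : ℝ, ((mix x).map (fun y => (x, y))) s
        = ENNReal.ofReal (q 0) * μc (Prod.mk x ⁻¹' s)
          + ∑ p ∈ Finset.Icc 1 m', ENNReal.ofReal (q p) * s.indicator 1 (x, f p x) := by
      intro x
      rw [show (fun y => (x, y)) = Prod.mk x from rfl,
        Measure.map_apply measurable_prodMk_left hs, hmix]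
      simp only [Measure.add_apply, Measure.smul_apply, smul_eq_mul,
        Measure.finset_sum_apply]
      congr 1
      refine Finset.sum_congr rfl fun p hp => ?_
      rw [Measure.dirac_apply' _ (measurable_prodMk_left hs)]
      rfl
    simp only [heq]
    apply Measurable.add
    · exact (measurable_measure_prodMk_left hs).const_mul _
    · apply Finset.measurable_sum
      intro p hp
      exact ((measurable_const.indicator hs).comp
        (measurable_id.prodMk (hfm p hp))).const_mul _
  rw [Measure.bind_apply (hA.prod hB) hKm.aemeasurable]
  have heq2 : ∀ x : ℝ, ((mix x).map (fun y => (x, y))) (A ×ˢ B)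
      = A.indicator (fun x => mix x B) x := by
    intro x
    rw [show (fun y => (x, y)) = Prod.mk x from rfl,
      Measure.map_apply measurable_prodMk_left (hA.prod hB)]
    by_cases hx : x ∈ A
    · have h1 : Prod.mk x ⁻¹' (A ×ˢ B) = B := by ext y; simp [hx]
      rw [h1, Set.indicator_of_mem hx]
    · have h1 : Prod.mk x ⁻¹' (A ×ˢ B) = ∅ := by ext y; simp [hx]
      rw [h1, Set.indicator_of_notMem hx, measure_empty]
  simp only [heq2]
  rw [lintegral_indicator hA]


/-- Two-sided bound on the Q-MAP pair regularizer: if `X₁` has density bounded between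
`mlo > 0` and `M` on `(0,1)` and the conditional law of `X₂` given `X₁ = x` is
`q₀·μ_c + Σ_p q_p·δ_{f_p(x)}` with the density of `μ_c` bounded below by `mc > 0`, then
there is a constant `C` with `1 - C/b ≤ r_b(u₁,u₂) ≤ 2 + C/b` for all `b ≥ 1` and all
`u₁, u₂ ∈ (0,1)`. -/
theorem stmt_9 (m' : ℕ) (q : ℕ → ℝ)
    (hq : ∀ p ∈ Finset.range (m' + 1), 0 < q p)
    (hqsum : ∑ p ∈ Finset.range (m' + 1), q p = 1)
    (μc : Measure ℝ) [IsProbabilityMeasure μc]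
    (hμc_supp : μc (Set.Ioo (0 : ℝ) 1)ᶜ = 0)
    (πc : ℝ → ENNReal) (hμc_dens : μc = volume.withDensity πc)
    (mc : ℝ) (hmc : 0 < mc)
    (hπclo : ∀ y ∈ Set.Ioo (0 : ℝ) 1, ENNReal.ofReal mc ≤ πc y)
    (f : ℕ → ℝ → ℝ) (hfm : ∀ p ∈ Finset.Icc 1 m', Measurable (f p))
    (ν : Measure ℝ) [IsProbabilityMeasure ν]
    (hν_supp : ν (Set.Ioo (0 : ℝ) 1)ᶜ = 0)
    (g : ℝ → ENNReal) (hν_dens : ν = volume.withDensity g)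
    (M mlo : ℝ) (hmlo : 0 < mlo)
    (hgM : ∀ y : ℝ, g y ≤ ENNReal.ofReal M)
    (hglo : ∀ y ∈ Set.Ioo (0 : ℝ) 1, ENNReal.ofReal mlo ≤ g y)
    (μ : Measure (ℝ × ℝ))
    (hμ : μ = ν.bind (fun x =>
      (ENNReal.ofReal (q 0) • μc +
        ∑ p ∈ Finset.Icc 1 m', ENNReal.ofReal (q p) • Measure.dirac (f p x)).map
        (fun y => (x, y)))) :
    ∃ C : ℝ, ∀ b : ℕ, 1 ≤ b →
      ∀ u1 ∈ Set.Ioo (0 : ℝ) 1, ∀ u2 ∈ Set.Ioo (0 : ℝ) 1,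
        1 - C / b ≤
          -(1 / b : ℝ) * Real.logb 2
            ((μ {z : ℝ × ℝ | ⌊(2 : ℝ) ^ b * z.1⌋ = ⌊(2 : ℝ) ^ b * u1⌋ ∧
                ⌊(2 : ℝ) ^ b * z.2⌋ = ⌊(2 : ℝ) ^ b * u2⌋}).toReal) ∧
        -(1 / b : ℝ) * Real.logb 2
            ((μ {z : ℝ × ℝ | ⌊(2 : ℝ) ^ b * z.1⌋ = ⌊(2 : ℝ) ^ b * u1⌋ ∧
                ⌊(2 : ℝ) ^ b * z.2⌋ = ⌊(2 : ℝ) ^ b * u2⌋}).toReal) ≤ 2 + C / b := by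
  -- basic positivity facts
  have hq0 : 0 < q 0 := hq 0 (by simp)
  have hM0 : 0 < M := by
    have h1 : ENNReal.ofReal mlo ≤ ENNReal.ofReal M :=
      le_trans (hglo (1/2) (by norm_num)) (hgM (1/2))
    have h2 : (0:ENNReal) < ENNReal.ofReal M :=
      lt_of_lt_of_le (ENNReal.ofReal_pos.2 hmlo) h1
    exact ENNReal.ofReal_pos.1 h2
  have hqprod : 0 < q 0 * mlo * mc := by positivity
  refine ⟨max (Real.logb 2 M) (-(Real.logb 2 (q 0 * mlo * mc))), ?_⟩
  intro b hb u1 hu1 u2 hu2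
  set C := max (Real.logb 2 M) (-(Real.logb 2 (q 0 * mlo * mc))) with hC
  have hb0 : (0:ℝ) < b := by exact_mod_cast hb
  have h2b : (0:ℝ) < 2 ^ b := by positivity
  set ε : ℝ := ((2:ℝ)^b)⁻¹ with hε
  have hε0 : 0 < ε := by positivity
  obtain ⟨a1, c1, ha1, hc1, hlen1, hset1⟩ := cell_struct b u1 hu1
  obtain ⟨a2, c2, ha2, hc2, hlen2, hset2⟩ := cell_struct b u2 hu2
  rw [← hε] at hlen1 hlen2
  -- rewrite the event as a product set
  have hSeq : {z : ℝ × ℝ | ⌊(2 : ℝ) ^ b * z.1⌋ = ⌊(2 : ℝ) ^ b * u1⌋ ∧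
      ⌊(2 : ℝ) ^ b * z.2⌋ = ⌊(2 : ℝ) ^ b * u2⌋} = Set.Ico a1 c1 ×ˢ Set.Ico a2 c2 := by
    ext ⟨z1, z2⟩
    have e1 := Set.ext_iff.1 hset1 z1
    have e2 := Set.ext_iff.1 hset2 z2
    simpa [Set.mem_prod] using and_congr e1 e2
  rw [hμ, hSeq, bind_prod_apply μc m' q f hfm ν _ _ measurableSet_Ico measurableSet_Ico]
  set mix : ℝ → Measure ℝ := fun x =>
    ENNReal.ofReal (q 0) • μc +
      ∑ p ∈ Finset.Icc 1 m', ENNReal.ofReal (q p) • Measure.dirac (f p x) with hmix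
  set A := Set.Ico a1 c1
  set B := Set.Ico a2 c2
  -- total mass of mix is 1
  have hrange : Finset.range (m'+1) = insert 0 (Finset.Icc 1 m') := by
    ext p; simp only [Finset.mem_range, Finset.mem_insert, Finset.mem_Icc]; omega
  have hqsum' : q 0 + ∑ p ∈ Finset.Icc 1 m', q p = 1 := by
    rw [hrange, Finset.sum_insert (by simp)] at hqsum; exact hqsum
  have hmix_univ : ∀ x, mix x Set.univ = 1 := by
    intro x
    simp only [hmix, Measure.add_apply, Measure.smul_apply, smul_eq_mul,
      Measure.finset_sum_apply, measure_univ, mul_one]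
    rw [← ENNReal.ofReal_sum_of_nonneg (fun p hp =>
      (hq p (by rw [hrange]; exact Finset.mem_insert_of_mem hp)).le),
      ← ENNReal.ofReal_add hq0.le (Finset.sum_nonneg (fun p hp =>
      (hq p (by rw [hrange]; exact Finset.mem_insert_of_mem hp)).le)), hqsum']
    simp
  -- upper bound on the measure
  have hup : ∫⁻ x in A, mix x B ∂ν ≤ ENNReal.ofReal M * ENNReal.ofReal ε := by
    calc ∫⁻ x in A, mix x B ∂ν ≤ ∫⁻ _ in A, 1 ∂ν :=
          setLIntegral_mono' measurableSet_Ico (fun x _ => by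
            rw [← hmix_univ x]; exact measure_mono (Set.subset_univ _))
    _ = ν A := by simp
    _ ≤ ENNReal.ofReal M * ENNReal.ofReal ε := by
        rw [hν_dens, ← hlen1]; exact dens_upper g M hgM a1 c1
  -- lower bound on the measure
  have hμcB : ENNReal.ofReal mc * ENNReal.ofReal ε ≤ μc B := by
    rw [hμc_dens, ← hlen2]; exact dens_lower πc mc hπclo a2 c2 ha2 hc2
  have hνA : ENNReal.ofReal mlo * ENNReal.ofReal ε ≤ ν A := by
    rw [hν_dens, ← hlen1]; exact dens_lower g mlo hglo a1 c1 ha1 hc1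
  have hlo : ENNReal.ofReal (q 0) * (ENNReal.ofReal mc * ENNReal.ofReal ε) *
      (ENNReal.ofReal mlo * ENNReal.ofReal ε) ≤ ∫⁻ x in A, mix x B ∂ν := by
    calc ENNReal.ofReal (q 0) * (ENNReal.ofReal mc * ENNReal.ofReal ε) *
        (ENNReal.ofReal mlo * ENNReal.ofReal ε)
        ≤ ENNReal.ofReal (q 0) * μc B * ν A := by
          gcongr
    _ = ∫⁻ _ in A, ENNReal.ofReal (q 0) * μc B ∂ν := by rw [setLIntegral_const]
    _ ≤ ∫⁻ x in A, mix x B ∂ν := by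
          refine setLIntegral_mono' measurableSet_Ico (fun x _ => ?_)
          simp only [hmix, Measure.add_apply, Measure.smul_apply, smul_eq_mul]
          exact le_add_right le_rfl
  -- move to real numbers
  set P := (∫⁻ x in A, mix x B ∂ν).toReal with hP
  have hfin : ∫⁻ x in A, mix x B ∂ν ≠ ⊤ :=
    ne_top_of_le_ne_top (by finiteness) hup
  have hPup : P ≤ M * ε := by
    have := ENNReal.toReal_mono (by finiteness) hup
    rwa [ENNReal.toReal_mul, ENNReal.toReal_ofReal hM0.le,
      ENNReal.toReal_ofReal hε0.le] at this
  have hPlo : q 0 * mc * ε * (mlo * ε) ≤ P := by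
    have h := ENNReal.toReal_mono hfin hlo
    simp only [ENNReal.toReal_mul] at h
    rw [ENNReal.toReal_ofReal hq0.le, ENNReal.toReal_ofReal hmc.le,
      ENNReal.toReal_ofReal hmlo.le, ENNReal.toReal_ofReal hε0.le] at h
    calc q 0 * mc * ε * (mlo * ε) = q 0 * (mc * ε) * (mlo * ε) := by ring
    _ ≤ P := h
  have hP0 : 0 < P := lt_of_lt_of_le (by positivity) hPlo
  -- logarithm computations
  have hlogε : Real.logb 2 ε = -b := by
    rw [hε, Real.logb_inv, Real.logb_pow, Real.logb_self_eq_one (by norm_num)]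
    ring
  have hLup : Real.logb 2 P ≤ Real.logb 2 M - b := by
    calc Real.logb 2 P ≤ Real.logb 2 (M * ε) :=
          Real.logb_le_logb_of_le (by norm_num) hP0 hPup
    _ = Real.logb 2 M + Real.logb 2 ε := Real.logb_mul (ne_of_gt hM0) (ne_of_gt hε0)
    _ = Real.logb 2 M - b := by rw [hlogε]; ring
  have hLlo : Real.logb 2 (q 0 * mlo * mc) - 2 * b ≤ Real.logb 2 P := by
    have hprod : q 0 * mc * ε * (mlo * ε) = q 0 * mlo * mc * (ε * ε) := by ring
    calc Real.logb 2 (q 0 * mlo * mc) - 2 * b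
        = Real.logb 2 (q 0 * mlo * mc * (ε * ε)) := by
          rw [Real.logb_mul (ne_of_gt hqprod) (by positivity),
            Real.logb_mul (ne_of_gt hε0) (ne_of_gt hε0), hlogε]; ring
    _ ≤ Real.logb 2 P := by
          rw [← hprod]
          exact Real.logb_le_logb_of_le (by norm_num) (by positivity) hPlo
  constructor
  · have h1 : -(1/b:ℝ) * Real.logb 2 P = (- Real.logb 2 P) / b := by ring
    rw [h1, le_div_iff₀ hb0]
    have hCM : Real.logb 2 M ≤ C := le_max_left _ _
    rw [show (1 - C / (b:ℝ)) * b = b - C by rw [sub_mul, one_mul, div_mul_cancel₀ _ (ne_of_gt hb0)]]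
    linarith
  · have h1 : -(1/b:ℝ) * Real.logb 2 P = (- Real.logb 2 P) / b := by ring
    rw [h1, div_le_iff₀ hb0]
    have hCq : -(Real.logb 2 (q 0 * mlo * mc)) ≤ C := le_max_right _ _
    rw [show (2 + C / (b:ℝ)) * b = 2 * b + C by rw [add_mul, div_mul_cancel₀ _ (ne_of_gt hb0)]]
    linarith
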